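/- Let G be a finite undirected graph that is not a pseudoforest, and let (x̄, ȳ) be a minimal extreme point of the orientation polyhedron P_orient(G) such that x̄_v < 1/3 for all vertices v. Then the support graph H(ȳ) — the bipartite graph on vertex set V(G) ∪ E(G) whose edges are the pairs {e, v} with v an endpoint of e and ȳ_{e,v} > 0 — is a forest. -/

import Mathlib

/- Common definitions for the polyhedral study of FVS / PFDS. -/

open scoped Classical
open Finset

namespace FVS

noncomputable section

variable {V : Type*}

/-- Degree of `u` in the subgraph of `G` induced on the vertex set `S`. -/
def degIn [Fintype V] (G : SimpleGraph V) (S : Finset V) (u : V) : ℕ :=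
  (S.filter fun v => G.Adj u v).card

/-- Number of edges of `G` with both endpoints in `S`, i.e. `|E[S]|`. -/
def edgesIn [Fintype V] (G : SimpleGraph V) (S : Finset V) : ℕ :=
  (G.edgeFinset.filter fun e => ∀ v ∈ e, v ∈ S).card

/-- A finite graph is a pseudoforest if each connected component has at most as many
edges as vertices. -/
def IsPseudoforest {W : Type*} [Fintype W] (H : SimpleGraph W) : Prop :=
  ∀ C : H.ConnectedComponent,
    (H.edgeFinset.filter fun e => ∀ v ∈ e, H.connectedComponentMk v = C).card ≤
      (Finset.univ.filter fun v => H.connectedComponentMk v = C).card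

/-- `U` is a pseudoforest deletion set for `G`: `G - U` is a pseudoforest. -/
def IsPFDS [Fintype V] (G : SimpleGraph V) (U : Finset V) : Prop :=
  IsPseudoforest (G.induce {v : V | v ∉ U})

/-- `F` is a feedback vertex set for `G`: `G - F` is acyclic. -/
def IsFVS [Fintype V] (G : SimpleGraph V) (F : Finset V) : Prop :=
  (G.induce {v : V | v ∉ F}).IsAcyclic

/-- Membership in the orientation polyhedron `P_orient(G)`: for every edge `e = uv`,
`x_u + x_v + y_{e,u} + y_{e,v} ≥ 1`; for every vertex `u`,
`x_u + Σ_{e ∈ δ(u)} y_{e,u} ≤ 1`; and all variables are nonnegative.  The variables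
`y e u` for pairs `(e, u)` where `e` is not an edge of `G` or `u` is not an endpoint
of `e` do not occur in the formulation and are pinned to `0`. -/
def POrient [Fintype V] (G : SimpleGraph V) (x : V → ℝ) (y : Sym2 V → V → ℝ) : Prop :=
  (∀ u v, G.Adj u v → 1 ≤ x u + x v + y s(u, v) u + y s(u, v) v) ∧
  (∀ u, x u + ∑ e ∈ G.edgeFinset.filter (fun e => u ∈ e), y e u ≤ 1) ∧
  (∀ u, 0 ≤ x u) ∧
  (∀ e u, 0 ≤ y e u) ∧
  (∀ e u, ¬ (e ∈ G.edgeSet ∧ u ∈ e) → y e u = 0)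

/-- Membership in `Q_orient(G)`, the projection of `P_orient(G)` to the `x`-variables. -/
def QOrient [Fintype V] (G : SimpleGraph V) (x : V → ℝ) : Prop :=
  ∃ y : Sym2 V → V → ℝ, POrient G x y

/-- Membership in the weak density polyhedron `P_WD(G)`:
`x ≥ 0` and `Σ_{u ∈ S} (d_S(u) - 1) x_u ≥ |E[S]| - |S|` for every `S ⊆ V`. -/
def PWD [Fintype V] (G : SimpleGraph V) (x : V → ℝ) : Prop :=
  (∀ u, 0 ≤ x u) ∧
  ∀ S : Finset V, (edgesIn G S : ℝ) - S.card ≤ ∑ u ∈ S, ((degIn G S u : ℝ) - 1) * x u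

/-- Membership in the strong density polyhedron `P_SD(G)`:
`x ≥ 0` and `Σ_{u ∈ S} (d_S(u) - 1) x_u ≥ |E[S]| - |S| + 1` whenever `E[S] ≠ ∅`. -/
def PSD [Fintype V] (G : SimpleGraph V) (x : V → ℝ) : Prop :=
  (∀ u, 0 ≤ x u) ∧
  ∀ S : Finset V, edgesIn G S ≠ 0 →
    (edgesIn G S : ℝ) - S.card + 1 ≤ ∑ u ∈ S, ((degIn G S u : ℝ) - 1) * x u

/-- The induced subgraph `G[U]` is a cycle: it is connected and `2`-regular. -/
def IsInducedCycle [Fintype V] (G : SimpleGraph V) (U : Finset V) : Prop :=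
  (G.induce (U : Set V)).Connected ∧ ∀ u ∈ U, degIn G U u = 2

/-- Membership in the cycle cover polyhedron `P_cycle-cover(G)`. -/
def PCycleCover [Fintype V] (G : SimpleGraph V) (x : V → ℝ) : Prop :=
  (∀ u, 0 ≤ x u) ∧ ∀ U : Finset V, IsInducedCycle G U → 1 ≤ ∑ u ∈ U, x u

/-- The induced subgraph `G[U]` is a `2`-pseudotree: connected with at least `|U| + 1` edges. -/
def Is2PseudotreeInduced [Fintype V] (G : SimpleGraph V) (U : Finset V) : Prop :=
  (G.induce (U : Set V)).Connected ∧ U.card + 1 ≤ edgesIn G U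

/-- Membership in the `2`-pseudotree cover polyhedron `P_2PT-cover(G)`. -/
def P2PTCover [Fintype V] (G : SimpleGraph V) (x : V → ℝ) : Prop :=
  (∀ u, 0 ≤ x u) ∧ ∀ U : Finset V, Is2PseudotreeInduced G U → 1 ≤ ∑ u ∈ U, x u

/-- `(x, y)` is an extreme point of `P_orient(G)`: it is feasible and is not a proper
convex combination of two distinct points of `P_orient(G)`. -/
def POrientExtreme [Fintype V] (G : SimpleGraph V) (x : V → ℝ) (y : Sym2 V → V → ℝ) : Prop :=
  POrient G x y ∧
    ∀ (x₁ x₂ : V → ℝ) (y₁ y₂ : Sym2 V → V → ℝ) (t : ℝ),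
      POrient G x₁ y₁ → POrient G x₂ y₂ → 0 < t → t < 1 →
      (∀ v, x v = t * x₁ v + (1 - t) * x₂ v) →
      (∀ e u, y e u = t * y₁ e u + (1 - t) * y₂ e u) →
      x₁ = x₂ ∧ y₁ = y₂

/-- `(x, y)` is a minimal point of `P_orient(G)`: decreasing any single coordinate by
any `ε > 0`, keeping the other coordinates unchanged, yields a point outside the
polyhedron. -/
def POrientMinimal [Fintype V] (G : SimpleGraph V) (x : V → ℝ) (y : Sym2 V → V → ℝ) : Prop :=
  (∀ v, ∀ ε : ℝ, 0 < ε → ¬ POrient G (Function.update x v (x v - ε)) y) ∧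
  (∀ e u, ∀ ε : ℝ, 0 < ε →
    ¬ POrient G x (fun e' u' => if e' = e ∧ u' = u then y e u - ε else y e' u'))

/-- `x` is an extreme point of `P_WD(G)`: it is feasible and is not a proper convex
combination of two distinct points of `P_WD(G)`. -/
def PWDExtreme [Fintype V] (G : SimpleGraph V) (x : V → ℝ) : Prop :=
  PWD G x ∧
    ∀ (x₁ x₂ : V → ℝ) (t : ℝ), PWD G x₁ → PWD G x₂ → 0 < t → t < 1 →
      (∀ v, x v = t * x₁ v + (1 - t) * x₂ v) → x₁ = x₂

/-- The support graph `H(y)`: the bipartite graph on `V(G) ⊕ E(G)` joining a vertex `v`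
to an edge `e` whenever `v` is an endpoint of the edge `e` of `G` and `y e v > 0`. -/
def supportGraph [Fintype V] (G : SimpleGraph V) (y : Sym2 V → V → ℝ) :
    SimpleGraph (V ⊕ Sym2 V) :=
  SimpleGraph.fromRel fun a b =>
    ∃ v e, a = Sum.inl v ∧ b = Sum.inr e ∧ e ∈ G.edgeSet ∧ v ∈ e ∧ 0 < y e v

/-- The edge `e` lies on some cycle of `G`. -/
def OnCycle (G : SimpleGraph V) (e : Sym2 V) : Prop :=
  ∃ (u : V) (w : G.Walk u u), w.IsCycle ∧ e ∈ w.edges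

/-- `G` has a semi-disjoint cycle: a cycle containing at most one vertex whose degree
in `G` is strictly larger than `2`. -/
def HasSemiDisjointCycle [Fintype V] (G : SimpleGraph V) : Prop :=
  ∃ (u : V) (w : G.Walk u u), w.IsCycle ∧
    (w.support.toFinset.filter fun v => 2 < G.degree v).card ≤ 1

/-- The set `δ(F, V - F)` of edges of `G` with exactly one endpoint in `F`. -/
def cutEdges [Fintype V] (G : SimpleGraph V) (F : Finset V) : Finset (Sym2 V) :=
  G.edgeFinset.filter fun e => ∃ u v, e = s(u, v) ∧ u ∈ F ∧ v ∉ F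

/-- The function `f_x(S) = |E[S]| - |S| - Σ_{u ∈ S} (d_S(u) - 1) x_u`. -/
def fWD [Fintype V] (G : SimpleGraph V) (x : V → ℝ) (S : Finset V) : ℝ :=
  (edgesIn G S : ℝ) - S.card - ∑ u ∈ S, ((degIn G S u : ℝ) - 1) * x u

/-- The row vector `row(S)` of the weak density constraint for the set `S`:
its coordinate at `u` is `d_S(u) - 1` if `u ∈ S` and `0` otherwise. -/
def rowWD [Fintype V] (G : SimpleGraph V) (S : Finset V) (u : V) : ℝ :=
  if u ∈ S then (degIn G S u : ℝ) - 1 else 0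

/-- The constraints (orientation), (load), (cumulative) and nonnegativity of the
purely orientation-based ILP formulation for FVS, with one copy `y f` of the
orientation variables for each edge `f` of `G`:
* `x_v + x_w + y^f_{e,v} + y^f_{e,w} ≥ 1` for all edges `e = vw` and all `f ∈ E`;
* `x_v + Σ_{e = vw ∈ E} y^f_{e,w} ≥ 1` for all `v ∈ V` and all `f ∈ E`;
* `Σ_{v ∈ V - {a,b}} x_v + Σ_{e = vw ∈ E - {f}} (y^f_{e,w} + y^f_{e,v}) ≤ |V| - 2`
  for all `f = ab ∈ E`; and all variables nonnegative. -/
def OrientSD [Fintype V] (G : SimpleGraph V) (x : V → ℝ)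
    (y : Sym2 V → Sym2 V → V → ℝ) : Prop :=
  (∀ f ∈ G.edgeSet, ∀ v w, G.Adj v w →
    1 ≤ x v + x w + y f s(v, w) v + y f s(v, w) w) ∧
  (∀ f ∈ G.edgeSet, ∀ v : V, 1 ≤ x v + ∑ w ∈ G.neighborFinset v, y f s(v, w) w) ∧
  (∀ a b : V, G.Adj a b →
    (∑ v ∈ Finset.univ \ {a, b}, x v) +
      (∑ e ∈ G.edgeFinset.erase s(a, b),
        ∑ u ∈ Finset.univ.filter (fun u => u ∈ e), y s(a, b) e u)
      ≤ (Fintype.card V : ℝ) - 2) ∧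
  (∀ u, 0 ≤ x u) ∧ (∀ f e u, 0 ≤ y f e u)

end
end FVS

namespace FVS


/-! ### Auxiliary material for `stmt_8` -/

section Stmt8Aux

variable {V : Type*}

/-- weight of a dart (as an ordered pair) w.r.t. the pair `(e, v)`. -/
noncomputable def dWeight (e : Sym2 V) (v : V) (p : (V ⊕ Sym2 V) × (V ⊕ Sym2 V)) : ℝ :=
  (if p.1 = Sum.inl v ∧ p.2 = Sum.inr e then 1 else 0)
    - (if p.1 = Sum.inr e ∧ p.2 = Sum.inl v then 1 else 0)

lemma list_sum_comm' {α β : Type*} (s : Finset β) (l : List α) (f : β → α → ℝ) :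
    ∑ v ∈ s, (l.map (f v)).sum = (l.map (fun d => ∑ v ∈ s, f v d)).sum := by
  induction l with
  | nil => simp
  | cons a l ih => simp [Finset.sum_add_distrib, ih]

lemma list_sum_single' {α : Type*} (l : List α) (hn : l.Nodup) (f : α → ℝ) (x : α)
    (hx : x ∈ l) (h : ∀ z ∈ l, z ≠ x → f z = 0) : (l.map f).sum = f x := by
  induction l with
  | nil => simp at hx
  | cons a l ih =>
    rcases List.mem_cons.mp hx with rfl | hx'
    · have hz0 : ∀ z ∈ l, f z = 0 := fun z hz =>
        h z (List.mem_cons_of_mem _ hz) (fun hza => (List.nodup_cons.mp hn).1 (hza ▸ hz))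
      simp [List.sum_eq_zero (fun r hr => by
        obtain ⟨z, hz, rfl⟩ := List.mem_map.mp hr
        exact hz0 z hz)]
    · have ha : f a = 0 := h a List.mem_cons_self (fun hax => by
        subst hax; exact (List.nodup_cons.mp hn).1 hx')
      simp [ha,
        ih (List.nodup_cons.mp hn).2 hx' (fun z hz hzx => h z (List.mem_cons_of_mem _ hz) hzx)]

lemma conservation' {W : Type*} [DecidableEq W] {H : SimpleGraph W} {a b : W} (w : H.Walk a b) (c : W) :
    (w.darts.map (fun d =>
        (if d.snd = c then (1 : ℝ) else 0) - (if d.fst = c then 1 else 0))).sum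
      = (if b = c then 1 else 0) - (if a = c then 1 else 0) := by
  induction w with
  | nil => simp
  | cons h p ih =>
    simp only [SimpleGraph.Walk.darts_cons, List.map_cons, List.sum_cons, ih]
    ring

lemma supportGraph_adj_cases [Fintype V] {G : SimpleGraph V} {y : Sym2 V → V → ℝ}
    {a b : V ⊕ Sym2 V} (h : (supportGraph G y).Adj a b) :
    (∃ v e, a = Sum.inl v ∧ b = Sum.inr e ∧ e ∈ G.edgeSet ∧ v ∈ e ∧ 0 < y e v) ∨
    (∃ v e, b = Sum.inl v ∧ a = Sum.inr e ∧ e ∈ G.edgeSet ∧ v ∈ e ∧ 0 < y e v) := by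
  rw [supportGraph, SimpleGraph.fromRel_adj] at h
  rcases h.2 with ⟨v, e, rfl, rfl, h'⟩ | ⟨v, e, h1, h2, h'⟩
  · exact Or.inl ⟨v, e, rfl, rfl, h'⟩
  · exact Or.inr ⟨v, e, h1, h2, h'⟩

lemma dWeight_cases {e : Sym2 V} {v : V} {p : (V ⊕ Sym2 V) × (V ⊕ Sym2 V)}
    (h : dWeight e v p ≠ 0) :
    (p.1 = Sum.inl v ∧ p.2 = Sum.inr e) ∨ (p.1 = Sum.inr e ∧ p.2 = Sum.inl v) := by
  by_contra hc
  rw [not_or] at hc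
  simp [dWeight, hc.1, hc.2] at h

lemma dWeight_mem {e : Sym2 V} {v : V} {p : (V ⊕ Sym2 V) × (V ⊕ Sym2 V)} :
    dWeight e v p = 0 ∨ dWeight e v p = 1 ∨ dWeight e v p = -1 := by
  unfold dWeight
  split_ifs with h1 h2 h2 <;> simp_all

lemma dWeight_edge {W : SimpleGraph (V ⊕ Sym2 V)} {e : Sym2 V} {v : V} (d : W.Dart)
    (h : dWeight e v d.toProd ≠ 0) : d.edge = s(Sum.inl v, Sum.inr e) := by
  have hrfl : d.edge = s(d.toProd.1, d.toProd.2) := rfl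
  rcases dWeight_cases h with ⟨h1, h2⟩ | ⟨h1, h2⟩
  · rw [hrfl, h1, h2]
  · rw [hrfl, h1, h2]; exact Sym2.eq_swap

end Stmt8Aux

/-- if `G` is not a pseudoforest and `(x, y)` is a minimal extreme point
of `P_orient(G)` with `x_v < 1/3` for all vertices `v`, then the support graph `H(y)`
is a forest. -/
theorem stmt_8 {V : Type*} [Fintype V] (G : SimpleGraph V)
    (hG : ¬ IsPseudoforest G) (x : V → ℝ) (y : Sym2 V → V → ℝ)
    (hext : POrientExtreme G x y) (hmin : POrientMinimal G x y)
    (hx : ∀ v, x v < 1 / 3) :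
    (supportGraph G y).IsAcyclic := by
  classical
  intro u w hw
  obtain ⟨⟨hedge, hload, hxnn, hynn, hypin⟩, hextreme⟩ := hext
  have hed_nodup : w.edges.Nodup := hw.isCircuit.isTrail.edges_nodup
  have hd_nodup : w.darts.Nodup := List.Nodup.of_map _ hed_nodup
  have hinj : ∀ d₁ ∈ w.darts, ∀ d₂ ∈ w.darts, d₁.edge = d₂.edge → d₁ = d₂ :=
    fun d₁ h1 d₂ h2 he => List.inj_on_of_nodup_map hed_nodup h1 h2 he
  set δ : Sym2 V → V → ℝ :=
    fun e v => (w.darts.map (fun d => dWeight e v d.toProd)).sum with hδdef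
  -- δ agrees with any single nonzero dart weight
  have hδeq : ∀ (e : Sym2 V) (v : V) (d : (supportGraph G y).Dart), d ∈ w.darts →
      dWeight e v d.toProd ≠ 0 → δ e v = dWeight e v d.toProd := by
    intro e v d hd hne
    refine list_sum_single' _ hd_nodup _ d hd ?_
    intro z hz hzd
    by_contra hz0
    exact hzd (hinj z hz d hd (by rw [dWeight_edge z hz0, dWeight_edge d hne]))
  have hδzero : ∀ (e : Sym2 V) (v : V),
      (∀ d ∈ w.darts, dWeight e v d.toProd = 0) → δ e v = 0 := by
    intro e v h
    exact List.sum_eq_zero (fun r hr => by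
      obtain ⟨z, hz, rfl⟩ := List.mem_map.mp hr; exact h z hz)
  have hδrange : ∀ (e : Sym2 V) (v : V), δ e v = 0 ∨ δ e v = 1 ∨ δ e v = -1 := by
    intro e v
    by_cases hex : ∃ d ∈ w.darts, dWeight e v d.toProd ≠ 0
    · obtain ⟨d, hd, hne⟩ := hex
      rw [hδeq e v d hd hne]; exact dWeight_mem
    · push_neg at hex
      exact Or.inl (hδzero e v hex)
  have hδsupp : ∀ (e : Sym2 V) (v : V), δ e v ≠ 0 →
      e ∈ G.edgeSet ∧ v ∈ e ∧ 0 < y e v := by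
    intro e v h
    have hex : ∃ d ∈ w.darts, dWeight e v d.toProd ≠ 0 := by
      by_contra hc; push_neg at hc; exact h (hδzero e v hc)
    obtain ⟨d, hd, hne⟩ := hex
    rcases dWeight_cases hne with ⟨h1, h2⟩ | ⟨h1, h2⟩
    · have hadj : (supportGraph G y).Adj (Sum.inl v) (Sum.inr e) := by
        rw [← h1, ← h2]; exact d.adj
      rcases supportGraph_adj_cases hadj with ⟨v', e', hv', he', hc⟩ | ⟨v', e', hv', he', hc⟩
      · obtain rfl : v = v' := Sum.inl.inj hv'
        obtain rfl : e = e' := Sum.inr.inj he'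
        exact hc
      · exact absurd he' (by simp)
    · have hadj : (supportGraph G y).Adj (Sum.inl v) (Sum.inr e) := by
        have := d.adj; rw [h1, h2] at this; exact this.symm
      rcases supportGraph_adj_cases hadj with ⟨v', e', hv', he', hc⟩ | ⟨v', e', hv', he', hc⟩
      · obtain rfl : v = v' := Sum.inl.inj hv'
        obtain rfl : e = e' := Sum.inr.inj he'
        exact hc
      · exact absurd he' (by simp)
  -- column sums vanish (conservation at Sym2-vertices)
  have hA : ∀ e : Sym2 V, ∑ v : V, δ e v = 0 := by
    intro e
    have h1 : ∑ v : V, δ e v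
        = (w.darts.map (fun d => ∑ v : V, dWeight e v d.toProd)).sum :=
      list_sum_comm' Finset.univ w.darts (fun v d => dWeight e v d.toProd)
    have h2 : w.darts.map (fun d => ∑ v : V, dWeight e v d.toProd)
        = w.darts.map (fun d => (if d.snd = (Sum.inr e : V ⊕ Sym2 V) then (1 : ℝ) else 0)
            - (if d.fst = (Sum.inr e : V ⊕ Sym2 V) then 1 else 0)) := by
      apply List.map_congr_left
      intro d _
      rcases supportGraph_adj_cases d.adj with ⟨v₀, e₀, ha, hb, _⟩ | ⟨v₀, e₀, ha, hb, _⟩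
      · have hfst : d.fst = Sum.inl v₀ := ha
        have hsnd : d.snd = Sum.inr e₀ := hb
        simp [dWeight, hfst, hsnd, ite_and, Finset.sum_ite_eq]
      · have hfst : d.fst = Sum.inr e₀ := hb
        have hsnd : d.snd = Sum.inl v₀ := ha
        simp [dWeight, hfst, hsnd, ite_and, Finset.sum_ite_eq]
    have h4 : (w.darts.map (fun d => (if d.snd = (Sum.inr e : V ⊕ Sym2 V) then (1 : ℝ) else 0)
        - (if d.fst = (Sum.inr e : V ⊕ Sym2 V) then 1 else 0))).sum = 0 := by
      have hc := conservation' w (Sum.inr e)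
      rw [sub_self] at hc
      convert hc using 2
    rw [h1, h2, h4]
  -- row sums vanish (conservation at V-vertices)
  have hB : ∀ v : V, ∑ e : Sym2 V, δ e v = 0 := by
    intro v
    have h1 : ∑ e : Sym2 V, δ e v
        = (w.darts.map (fun d => ∑ e : Sym2 V, dWeight e v d.toProd)).sum :=
      list_sum_comm' Finset.univ w.darts (fun e d => dWeight e v d.toProd)
    have h2 : w.darts.map (fun d => ∑ e : Sym2 V, dWeight e v d.toProd)
        = w.darts.map (fun d => -((if d.snd = (Sum.inl v : V ⊕ Sym2 V) then (1 : ℝ) else 0)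
            - (if d.fst = (Sum.inl v : V ⊕ Sym2 V) then 1 else 0))) := by
      apply List.map_congr_left
      intro d _
      rcases supportGraph_adj_cases d.adj with ⟨v₀, e₀, ha, hb, _⟩ | ⟨v₀, e₀, ha, hb, _⟩
      · have hfst : d.fst = Sum.inl v₀ := ha
        have hsnd : d.snd = Sum.inr e₀ := hb
        simp [dWeight, hfst, hsnd, ite_and, Finset.sum_ite_eq]
      · have hfst : d.fst = Sum.inr e₀ := hb
        have hsnd : d.snd = Sum.inl v₀ := ha
        simp [dWeight, hfst, hsnd, ite_and, Finset.sum_ite_eq]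
    have h3 : (w.darts.map (fun d =>
        -((if d.snd = (Sum.inl v : V ⊕ Sym2 V) then (1 : ℝ) else 0)
            - (if d.fst = (Sum.inl v : V ⊕ Sym2 V) then 1 else 0)))).sum
        = -((w.darts.map (fun d => (if d.snd = (Sum.inl v : V ⊕ Sym2 V) then (1 : ℝ) else 0)
            - (if d.fst = (Sum.inl v : V ⊕ Sym2 V) then 1 else 0))).sum) := by
      induction w.darts with
      | nil => simp
      | cons a l ih => simp only [List.map_cons, List.sum_cons, ih]; ring
    have h4 : (w.darts.map (fun d => (if d.snd = (Sum.inl v : V ⊕ Sym2 V) then (1 : ℝ) else 0)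
        - (if d.fst = (Sum.inl v : V ⊕ Sym2 V) then 1 else 0))).sum = 0 := by
      have hc := conservation' w (Sum.inl v)
      rw [sub_self] at hc
      convert hc using 2
    rw [h1, h2, h3, h4, neg_zero]
  -- the two endpoints of an edge have cancelling δ's
  have hsplit : ∀ u' v', G.Adj u' v' → δ s(u', v') u' + δ s(u', v') v' = 0 := by
    intro u' v' hadj
    have h0 := hA s(u', v')
    have hsub : ∑ z ∈ ({u', v'} : Finset V), δ s(u', v') z = ∑ z : V, δ s(u', v') z := by
      apply Finset.sum_subset (Finset.subset_univ _)
      intro z _ hz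
      by_contra h
      obtain ⟨_, hz2, _⟩ := hδsupp _ _ h
      rw [Sym2.mem_iff] at hz2
      rcases hz2 with rfl | rfl
      · exact hz (by simp)
      · exact hz (by simp)
    rw [Finset.sum_pair hadj.ne] at hsub
    rw [hsub, h0]
  -- δ sums to zero over the incident edges of each vertex
  have hloadδ : ∀ v' : V,
      ∑ e ∈ G.edgeFinset.filter (fun e => v' ∈ e), δ e v' = 0 := by
    intro v'
    have hsub : ∑ e ∈ G.edgeFinset.filter (fun e => v' ∈ e), δ e v'
        = ∑ e : Sym2 V, δ e v' := by
      apply Finset.sum_subset (Finset.subset_univ _)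
      intro e _ he
      by_contra h
      obtain ⟨h1, h2, _⟩ := hδsupp e v' h
      exact he (Finset.mem_filter.mpr ⟨SimpleGraph.mem_edgeFinset.mpr h1, h2⟩)
    rw [hsub, hB v']
  -- δ is nonzero somewhere
  have hne_nil : w.darts ≠ [] := by
    have h3 := hw.ne_nil
    cases w with
    | nil => exact absurd rfl h3
    | cons h p => simp [SimpleGraph.Walk.darts_cons]
  obtain ⟨d₀, hd₀⟩ := List.exists_mem_of_ne_nil _ hne_nil
  have hex0 : ∃ (e₀ : Sym2 V) (v₀ : V), δ e₀ v₀ ≠ 0 := by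
    rcases supportGraph_adj_cases d₀.adj with ⟨v₀, e₀, ha, hb, _⟩ | ⟨v₀, e₀, ha, hb, _⟩
    · have hval : dWeight e₀ v₀ d₀.toProd = 1 := by
        have hfst : d₀.fst = Sum.inl v₀ := ha
        have hsnd : d₀.snd = Sum.inr e₀ := hb
        simp [dWeight, hfst, hsnd]
      refine ⟨e₀, v₀, ?_⟩
      rw [hδeq e₀ v₀ d₀ hd₀ (by rw [hval]; norm_num), hval]
      norm_num
    · have hval : dWeight e₀ v₀ d₀.toProd = -1 := by
        have hfst : d₀.fst = Sum.inr e₀ := hb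
        have hsnd : d₀.snd = Sum.inl v₀ := ha
        simp [dWeight, hfst, hsnd]
      refine ⟨e₀, v₀, ?_⟩
      rw [hδeq e₀ v₀ d₀ hd₀ (by rw [hval]; norm_num), hval]
      norm_num
  obtain ⟨e₀, v₀, hne0⟩ := hex0
  -- the step size ε
  set S : Finset (Sym2 V × V) := Finset.univ.filter (fun p => δ p.1 p.2 ≠ 0) with hSdef
  have hS : S.Nonempty := ⟨(e₀, v₀), Finset.mem_filter.mpr ⟨Finset.mem_univ _, hne0⟩⟩
  set ε : ℝ := S.inf' hS (fun p => y p.1 p.2) with hεdef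
  have hεpos : 0 < ε := by
    rw [hεdef, Finset.lt_inf'_iff]
    intro p hp
    exact (hδsupp p.1 p.2 (Finset.mem_filter.mp hp).2).2.2
  have hεle : ∀ (e : Sym2 V) (v : V), δ e v ≠ 0 → ε ≤ y e v := by
    intro e v h
    have hm : (e, v) ∈ S := by
      rw [hSdef]
      exact Finset.mem_filter.mpr ⟨Finset.mem_univ _, h⟩
    exact Finset.inf'_le _ hm
  -- feasibility of the perturbed points
  have hP : ∀ s : ℝ, (s = 1 ∨ s = -1) →
      POrient G x (fun e v => y e v + s * ε * δ e v) := by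
    intro s hs
    refine ⟨?_, ?_, hxnn, ?_, ?_⟩
    · intro u' v' hadj
      dsimp only
      have h1 := hedge u' v' hadj
      have key : s * ε * δ s(u', v') u' + s * ε * δ s(u', v') v' = 0 := by
        have : s * ε * δ s(u', v') u' + s * ε * δ s(u', v') v'
            = s * ε * (δ s(u', v') u' + δ s(u', v') v') := by ring
        rw [this, hsplit u' v' hadj, mul_zero]
      linarith
    · intro u'
      dsimp only
      have h1 := hload u'
      have h2 : ∑ e ∈ G.edgeFinset.filter (fun e => u' ∈ e),
          (y e u' + s * ε * δ e u')
          = (∑ e ∈ G.edgeFinset.filter (fun e => u' ∈ e), y e u')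
            + s * ε * ∑ e ∈ G.edgeFinset.filter (fun e => u' ∈ e), δ e u' := by
        rw [Finset.sum_add_distrib, Finset.mul_sum]
      rw [h2, hloadδ u', mul_zero]
      linarith
    · intro e v
      dsimp only
      by_cases h : δ e v = 0
      · simp [h]; exact hynn e v
      · have hy := hεle e v h
        have hd : δ e v = 1 ∨ δ e v = -1 := (hδrange e v).resolve_left h
        have hsd : s * δ e v = 1 ∨ s * δ e v = -1 := by
          rcases hs with rfl | rfl <;> rcases hd with hd | hd <;> rw [hd] <;> norm_num
        rcases hsd with hsd | hsd
        · have : s * ε * δ e v = ε := by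
            have : s * ε * δ e v = ε * (s * δ e v) := by ring
            rw [this, hsd, mul_one]
          rw [this]
          have := hynn e v
          linarith
        · have : s * ε * δ e v = -ε := by
            have : s * ε * δ e v = ε * (s * δ e v) := by ring
            rw [this, hsd]; ring
          rw [this]
          linarith
    · intro e v h
      dsimp only
      have hz : δ e v = 0 := by
        by_contra hc
        exact h ⟨(hδsupp e v hc).1, (hδsupp e v hc).2.1⟩
      rw [hypin e v h, hz]
      ring
  have hP1 := hP 1 (Or.inl rfl)
  have hP2 := hP (-1) (Or.inr rfl)
  obtain ⟨-, hy12⟩ := hextreme x x _ _ (1/2) hP1 hP2 (by norm_num) (by norm_num)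
    (fun v => by ring) (fun e v => by ring)
  have heq := congrFun (congrFun hy12 e₀) v₀
  have hmul : ε * δ e₀ v₀ = 0 := by nlinarith [heq]
  rcases mul_eq_zero.mp hmul with h | h
  · exact absurd h (ne_of_gt hεpos)
  · exact hne0 h

end FVS
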